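/- Let Λ = Σ_i λ_i Λ_i ∈ P⁺ and let M be a simple R(ν)-module in the category rep Λ (i.e. ε̌_i(M) ≤ λ_i for all i). Define φ^Λ_i(M) = λ_i + ε_i(M) + wt_i(M). Then, assuming the standard interface, φ^Λ_i(M) = max{n ∈ ℤ : pr_Λ f̃_i^n M ≠ 0}, where pr_Λ is the functor M ↦ M / I^Λ M killing the cyclotomic ideal. In particular for Λ = Λ_j and M ≠ the unit module, φ^{Λ_j}_i(M) = jump_i(M). -/
import Mathlib


/-- Characterization of `φ^Λ_i` for simple KLR modules of type `A^{(1)}_{ℓ-1}`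
(abstract interface on the set `S` of iso-classes of simple modules):
if `M ∈ rep Λ` (i.e. `ε̌_j(M) ≤ λ_j` for all `j`, which by Proposition cyclotomic-char
characterizes `pr_Λ M ≠ 0`), then `φ^Λ_i(M) = λ_i + ε_i(M) + wt_i(M)` is the largest
`n` with `pr_Λ f̃_i^n M ≠ 0`.  Moreover, for `Λ = Λ_j` and `M` not the unit module
(so `ε̌_k(M) = δ_{kj}`), `φ^{Λ_j}_i(M) = jump_i(M)`. -/
theorem phi_cyclotomic_characterization {S : Type*} {ℓ : ℕ}
    (wt : ZMod ℓ → S → ℤ) (eps epsCh : ZMod ℓ → S → ℕ) (ftil : ZMod ℓ → S → S)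
    (Λ : ZMod ℓ → ℕ) (M : S) (i : ZMod ℓ)
    (hrep : ∀ j, epsCh j M ≤ Λ j)
    (heps_f : ∀ j N, eps j (ftil j N) = eps j N + 1)
    (hwt_f : ∀ j N, wt j (ftil j N) = wt j N - 2)
    (hepsCh_f : ∀ j N, epsCh j (ftil j N) = epsCh j N ∨ epsCh j (ftil j N) = epsCh j N + 1)
    (hepsCh_f' : ∀ j k N, j ≠ k → epsCh j (ftil k N) = epsCh j N)
    (hjump_f : ∀ j N,
      wt j (ftil j N) + (eps j (ftil j N) : ℤ) + (epsCh j (ftil j N) : ℤ) =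
        max 0 (wt j N + (eps j N : ℤ) + (epsCh j N : ℤ) - 1)) :
    (∃ n : ℕ, (n : ℤ) = (Λ i : ℤ) + (eps i M : ℤ) + wt i M ∧
      IsGreatest {m : ℕ | ∀ j, epsCh j ((ftil i)^[m] M) ≤ Λ j} n) ∧
    (∀ j : ZMod ℓ, (∀ k, Λ k = if k = j then 1 else 0) →
      (∀ k, epsCh k M = if k = j then 1 else 0) →
      (Λ i : ℤ) + (eps i M : ℤ) + wt i M
        = wt i M + (eps i M : ℤ) + (epsCh i M : ℤ)) := by

  constructor
  · -- main part
    set J : ℕ → ℤ := fun m =>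
      wt i ((ftil i)^[m] M) + eps i ((ftil i)^[m] M) + epsCh i ((ftil i)^[m] M) with hJ
    have hstep : ∀ m, J (m + 1) = max 0 (J m - 1) := by
      intro m
      simp only [hJ, Function.iterate_succ_apply']
      exact hjump_f i _
    have hrel : ∀ m, (epsCh i ((ftil i)^[m + 1] M) : ℤ) - epsCh i ((ftil i)^[m] M)
        = J (m + 1) - J m + 1 := by
      intro m
      have h1 : wt i ((ftil i)^[m + 1] M) = wt i ((ftil i)^[m] M) - 2 := by
        rw [Function.iterate_succ_apply']; exact hwt_f i _
      have h2 : (eps i ((ftil i)^[m + 1] M) : ℤ) = eps i ((ftil i)^[m] M) + 1 := by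
        rw [Function.iterate_succ_apply', heps_f]; push_cast; ring
      simp only [hJ]
      rw [h1, h2]; ring
    have hc : ∀ m, (epsCh i ((ftil i)^[m + 1] M) : ℤ) = epsCh i ((ftil i)^[m] M) ∨
        (epsCh i ((ftil i)^[m + 1] M) : ℤ) = epsCh i ((ftil i)^[m] M) + 1 := by
      intro m
      rcases hepsCh_f i ((ftil i)^[m] M) with h | h
      · left; rw [Function.iterate_succ_apply', h]
      · right; rw [Function.iterate_succ_apply', h]; push_cast; ring
    have hJnn : ∀ m, 0 ≤ J m := by
      intro m
      rcases hc m with h | h <;> have h1 := hrel m <;> have h2 := hstep m <;> omega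
    have hJform : ∀ m, J m = max 0 (J 0 - m) := by
      intro m
      induction m with
      | zero => have := hJnn 0; simp; omega
      | succ k ih =>
        have h2 := hstep k
        push_cast
        omega
    have hcform : ∀ m, (epsCh i ((ftil i)^[m] M) : ℤ)
        = epsCh i M + max 0 ((m : ℤ) - J 0) := by
      intro m
      induction m with
      | zero =>
        have := hJnn 0
        simp only [Function.iterate_zero, id_eq, Nat.cast_zero]
        omega
      | succ k ih =>
        have h1 := hrel k
        have h2 := hJform k
        have h3 := hJform (k + 1)
        have h4 := hJnn 0
        push_cast at h3 ⊢
        omega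
    have hother : ∀ j, j ≠ i → ∀ m, epsCh j ((ftil i)^[m] M) = epsCh j M := by
      intro j hj m
      induction m with
      | zero => simp
      | succ k ih => rw [Function.iterate_succ_apply', hepsCh_f' j i _ hj, ih]
    have hmem : ∀ m, (∀ j, epsCh j ((ftil i)^[m] M) ≤ Λ j) ↔
        (epsCh i ((ftil i)^[m] M) : ℤ) ≤ Λ i := by
      intro m
      constructor
      · intro h; exact_mod_cast h i
      · intro h j
        by_cases hji : j = i
        · subst hji; exact_mod_cast h
        · rw [hother j hji]; exact hrep j
    have hJ0 : J 0 = wt i M + eps i M + epsCh i M := by simp [hJ]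
    have hle : (epsCh i M : ℤ) ≤ Λ i := by exact_mod_cast hrep i
    have hn0 : 0 ≤ (Λ i : ℤ) + eps i M + wt i M := by
      have := hJnn 0; omega
    refine ⟨((Λ i : ℤ) + eps i M + wt i M).toNat, Int.toNat_of_nonneg hn0, ?_, ?_⟩
    · rw [Set.mem_setOf_eq, hmem, hcform]
      have h0 := hJnn 0
      have := Int.toNat_of_nonneg hn0
      omega
    · intro m hm
      rw [Set.mem_setOf_eq, hmem, hcform] at hm
      have := Int.toNat_of_nonneg hn0
      omega
  · intro j hΛ hCh
    rw [hΛ i, hCh i]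
    ring
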